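/- arXiv:0801.4022 — 3 statements merged into one kernel-verified Lean document; each statement's English description precedes it below -/
import Mathlib

section
/- Let k, ℓ ≥ 0 be integers and set N = k + ℓ + 1. Let x : ℝ^k → ℝ^N and y : ℝ^ℓ → ℝ^N be maps differentiable at points s ∈ ℝ^k and t ∈ ℝ^ℓ respectively, with x(s) ≠ y(t), and define f(s,t) = (x(s) − y(t))/‖x(s) − y(t)‖ ∈ ℝ^N. Then det(f(s,t), ∂f/∂s₁, …, ∂f/∂s_k, ∂f/∂t₁, …, ∂f/∂t_ℓ) = (−1)^ℓ · ‖x(s) − y(t)‖^{−N} · det(x(s) − y(t), ∂x/∂s₁, …, ∂x/∂s_k, ∂y/∂t₁, …, ∂y/∂t_ℓ), where all partial derivatives are evaluated at (s,t). -/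
/-- The determinant of the square matrix whose rows are the given vectors. -/
noncomputable def rowDet {N : ℕ} (rows : Fin N → EuclideanSpace ℝ (Fin N)) : ℝ :=
  Matrix.det (Matrix.of fun i j => rows i j)

/-- With N = k + ℓ + 1, x : ℝ^k → ℝ^N and y : ℝ^ℓ → ℝ^N differentiable at s, t
with x(s) ≠ y(t), and f(s,t) = (x(s) − y(t))/‖x(s) − y(t)‖, one has
`det(f(s,t), ∂f/∂s₁, …, ∂f/∂s_k, ∂f/∂t₁, …, ∂f/∂t_ℓ)
  = (−1)^ℓ · ‖x(s) − y(t)‖^{−N} · det(x(s) − y(t), ∂x/∂s₁, …, ∂x/∂s_k, ∂y/∂t₁, …, ∂y/∂t_ℓ)`. -/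
theorem gauss_pullback_identity (k l : ℕ)
    (x : EuclideanSpace ℝ (Fin k) → EuclideanSpace ℝ (Fin (k + l + 1)))
    (y : EuclideanSpace ℝ (Fin l) → EuclideanSpace ℝ (Fin (k + l + 1)))
    (s : EuclideanSpace ℝ (Fin k)) (t : EuclideanSpace ℝ (Fin l))
    (hx : DifferentiableAt ℝ x s) (hy : DifferentiableAt ℝ y t)
    (hxy : x s ≠ y t)
    (f : EuclideanSpace ℝ (Fin k) × EuclideanSpace ℝ (Fin l) →
      EuclideanSpace ℝ (Fin (k + l + 1)))
    (hf : f = fun p => ‖x p.1 - y p.2‖⁻¹ • (x p.1 - y p.2)) :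
    rowDet (Fin.cons (f (s, t))
        (Fin.append
          (fun i : Fin k => fderiv ℝ f (s, t) (EuclideanSpace.single i 1, 0))
          (fun j : Fin l => fderiv ℝ f (s, t) (0, EuclideanSpace.single j 1))))
      = (-1) ^ l / ‖x s - y t‖ ^ (k + l + 1) *
        rowDet (Fin.cons (x s - y t)
          (Fin.append
            (fun i : Fin k => fderiv ℝ x s (EuclideanSpace.single i 1))
            (fun j : Fin l => fderiv ℝ y t (EuclideanSpace.single j 1)))) := by
  set r : EuclideanSpace ℝ (Fin (k + l + 1)) := x s - y t with hr
  have hne : r ≠ 0 := sub_ne_zero.2 hxy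
  have hρ : ‖r‖ ≠ 0 := norm_ne_zero_iff.2 hne
  set ρi : ℝ := ‖r‖⁻¹ with hρi
  -- derivative of g p = x p.1 - y p.2
  have h1 : HasFDerivAt (x ∘ Prod.fst)
      ((fderiv ℝ x s).comp (ContinuousLinearMap.fst ℝ _ _)) (s, t) :=
    hx.hasFDerivAt.comp (s, t) hasFDerivAt_fst
  have h2 : HasFDerivAt (y ∘ Prod.snd)
      ((fderiv ℝ y t).comp (ContinuousLinearMap.snd ℝ _ _)) (s, t) :=
    hy.hasFDerivAt.comp (s, t) hasFDerivAt_snd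
  set G := (fderiv ℝ x s).comp (ContinuousLinearMap.fst ℝ _ _) -
      (fderiv ℝ y t).comp (ContinuousLinearMap.snd ℝ _ _) with hG
  have hg : HasFDerivAt (fun p => x p.1 - y p.2) G (s, t) := h1.sub h2
  -- derivative of the inverse norm factor
  have hnd : DifferentiableAt ℝ (fun p => ‖x p.1 - y p.2‖⁻¹) (s, t) :=
    (hg.differentiableAt.norm (𝕜 := ℝ) hne).inv hρ
  set c : _ →L[ℝ] ℝ := fderiv ℝ (fun p => ‖x p.1 - y p.2‖⁻¹) (s, t) with hc
  have hf' : HasFDerivAt f (ρi • G + c.smulRight r) (s, t) := by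
    rw [hf]; exact hnd.hasFDerivAt.smul hg
  have hfd : fderiv ℝ f (s, t) = ρi • G + c.smulRight r := hf'.fderiv
  -- the coefficient vectors
  set e : Fin (k + l + 1) → ℝ := Fin.cons 0 (Fin.append
      (fun i : Fin k => c (EuclideanSpace.single i 1, 0))
      (fun j : Fin l => c (0, EuclideanSpace.single j 1))) with he
  set d : Fin (k + l + 1) → ℝ := Fin.cons ρi (Fin.append
      (fun _ : Fin k => ρi) (fun _ : Fin l => -ρi)) with hd
  set A0 : Fin (k + l + 1) → EuclideanSpace ℝ (Fin (k + l + 1)) := Fin.cons r (Fin.append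
      (fun i : Fin k => fderiv ℝ x s (EuclideanSpace.single i 1))
      (fun j : Fin l => fderiv ℝ y t (EuclideanSpace.single j 1))) with hA0
  set M : Fin (k + l + 1) → EuclideanSpace ℝ (Fin (k + l + 1)) := Fin.cons (f (s, t)) (Fin.append
      (fun i : Fin k => fderiv ℝ f (s, t) (EuclideanSpace.single i 1, 0))
      (fun j : Fin l => fderiv ℝ f (s, t) (0, EuclideanSpace.single j 1))) with hM
  have hrow : ∀ i, M i = e i • r + d i • A0 i := by
    refine Fin.cases ?_ ?_
    · simp only [hM, he, hd, hA0, Fin.cons_zero, hf]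
      simp [hr, hρi]
    · intro i
      simp only [hM, he, hd, hA0, Fin.cons_succ]
      refine Fin.addCases (fun i => ?_) (fun j => ?_) i
      · simp only [Fin.append_left, hfd]
        rw [ContinuousLinearMap.add_apply, ContinuousLinearMap.smul_apply,
          ContinuousLinearMap.smulRight_apply]
        have hGv : G (EuclideanSpace.single i 1, 0)
            = fderiv ℝ x s (EuclideanSpace.single i 1) := by
          simp [hG, ContinuousLinearMap.sub_apply]
        rw [hGv]
        exact add_comm _ _
      · simp only [Fin.append_right, hfd]
        rw [ContinuousLinearMap.add_apply, ContinuousLinearMap.smul_apply,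
          ContinuousLinearMap.smulRight_apply]
        have hGv : G (0, EuclideanSpace.single j 1)
            = -(fderiv ℝ y t (EuclideanSpace.single j 1)) := by
          simp [hG, ContinuousLinearMap.sub_apply]
        rw [hGv, smul_neg, ← neg_smul]
        exact add_comm _ _
  -- matrices
  set A : Matrix (Fin (k + l + 1)) (Fin (k + l + 1)) ℝ := Matrix.of fun i j => A0 i j with hA
  set C : Matrix (Fin (k + l + 1)) (Fin (k + l + 1)) ℝ :=
    Matrix.of (fun i j => (if j = 0 then e i else 0) + (if i = j then d i else 0)) with hC
  have hmul : (Matrix.of fun i j => M i j) = C * A := by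
    ext i j
    rw [Matrix.mul_apply]
    simp only [hC, Matrix.of_apply, ite_mul, zero_mul, add_mul,
      Finset.sum_add_distrib, Finset.sum_ite_eq, Finset.sum_ite_eq', Finset.mem_univ, if_true]
    rw [hrow i]
    simp [hA, PiLp.add_apply, PiLp.smul_apply, smul_eq_mul, hA0]
  have hdetC : C.det = (-1) ^ l * ρi ^ (k + l + 1) := by
    rw [Matrix.det_of_lowerTriangular C ?_]
    · have : ∀ i, C i i = d i := by
        intro i
        simp only [hC, Matrix.of_apply, if_pos rfl]
        rcases eq_or_ne i 0 with h | h
        · subst h; simp [he]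
        · simp [h]
      rw [Finset.prod_congr rfl fun i _ => this i]
      rw [hd, Fin.prod_univ_succ]
      simp only [Fin.cons_zero, Fin.cons_succ]
      rw [Fin.prod_univ_add]
      simp only [Fin.append_left, Fin.append_right, Finset.prod_const, Finset.card_univ,
        Fintype.card_fin]
      rw [neg_pow]
      ring
    · intro i j hij
      have hij' : (i : Fin (k + l + 1)) < j := hij
      have h0 : j ≠ 0 := by
        intro h; subst h; exact absurd hij' (by simp [Fin.lt_iff_val_lt_val])
      have h1 : i ≠ j := ne_of_lt hij'
      simp [hC, h0, h1]
  have key : rowDet M = C.det * A.det := by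
    rw [rowDet, hmul, Matrix.det_mul]
  calc rowDet M = C.det * A.det := key
    _ = (-1) ^ l / ‖x s - y t‖ ^ (k + l + 1) * rowDet A0 := by
        rw [hdetC, rowDet, ← hA]
        rw [hρi, inv_pow, ← hr]
        ring
end

section
/- Let k, ℓ ≥ 0 be integers and set n = k + ℓ + 1. Let x, y ∈ ℝ^{n+1} be linearly independent vectors, and let α = arccos(⟨x,y⟩/(‖x‖‖y‖)) ∈ (0, π) be the angle between x and y. Then the function τ ↦ τ^k / ‖τx − y‖^{n+1} is integrable on (0, ∞) and ∫₀^∞ τ^k / ‖τx − y‖^{n+1} dτ = Ω_{k,ℓ}(α) / (‖x‖^{k+1} ‖y‖^{ℓ+1} sin^n α). -/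
open Real Set MeasureTheory


open Real in
/-- For integers k, ℓ ≥ 0 and α ∈ ℝ, Ω_{k,ℓ}(α) = ∫_{θ=α}^{π} sin^k(θ − α) sin^ℓ(θ) dθ. -/
noncomputable def Omega (k l : ℕ) (α : ℝ) : ℝ :=
  ∫ θ in α..π, Real.sin (θ - α) ^ k * Real.sin θ ^ l

section aux

variable {a b α : ℝ}

/-- the substitution function -/
noncomputable def subF (a b α θ : ℝ) : ℝ := (b / a) * (Real.sin (θ - α) / Real.sin θ)

lemma subF_hasDerivAt (hα : 0 < α) (hπ : α < π) {θ : ℝ} (hθ : θ ∈ Ioo α π) :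
    HasDerivAt (subF a b α) ((b / a) * (Real.sin α / Real.sin θ ^ 2)) θ := by
  have hsθ : 0 < Real.sin θ := Real.sin_pos_of_pos_of_lt_pi (hα.trans hθ.1) hθ.2
  have h1 : HasDerivAt (fun θ : ℝ => Real.sin (θ - α)) (Real.cos (θ - α)) θ := by
    exact ((Real.hasDerivAt_sin (θ - α)).comp θ ((hasDerivAt_id θ).sub_const α)).congr_deriv
      (mul_one _)
  have h2 : HasDerivAt Real.sin (Real.cos θ) θ := Real.hasDerivAt_sin θ
  have h3 := (h1.div h2 hsθ.ne')
  have h4 := h3.const_mul (b / a)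
  refine HasDerivAt.congr_deriv (f := subF a b α) h4 ?_
  have key := Real.sin_sub θ (θ - α)
  rw [sub_sub_cancel] at key
  rw [show Real.sin α = Real.cos (θ - α) * Real.sin θ - Real.sin (θ - α) * Real.cos θ by
    rw [key]; ring]

lemma subF_strictMono (hα : 0 < α) (hπ : α < π) (ha : 0 < a) (hb : 0 < b) :
    StrictMonoOn (subF a b α) (Ioo α π) := by
  apply strictMonoOn_of_deriv_pos (convex_Ioo _ _)
  · exact fun θ hθ => (subF_hasDerivAt hα hπ hθ).continuousAt.continuousWithinAt
  · intro θ hθ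
    rw [interior_Ioo] at hθ
    rw [(subF_hasDerivAt hα hπ hθ).deriv]
    have hsθ : 0 < Real.sin θ := Real.sin_pos_of_pos_of_lt_pi (hα.trans hθ.1) hθ.2
    have hsα : 0 < Real.sin α := Real.sin_pos_of_pos_of_lt_pi hα hπ
    positivity

lemma subF_image (hα : 0 < α) (hπ : α < π) (ha : 0 < a) (hb : 0 < b) :
    subF a b α '' Ioo α π = Ioi 0 := by
  have hsα : 0 < Real.sin α := Real.sin_pos_of_pos_of_lt_pi hα hπ
  ext t
  constructor
  · rintro ⟨θ, hθ, rfl⟩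
    have hsθ : 0 < Real.sin θ := Real.sin_pos_of_pos_of_lt_pi (hα.trans hθ.1) hθ.2
    have hsd : 0 < Real.sin (θ - α) :=
      Real.sin_pos_of_pos_of_lt_pi (by linarith [hθ.1]) (by linarith [hθ.2])
    have : 0 < subF a b α θ := by unfold subF; positivity
    simpa using this
  · intro ht
    have ht : (0:ℝ) < t := ht
    set v : ℝ := (Real.cos α - a * t / b) / Real.sin α with hv
    refine ⟨π / 2 - Real.arctan v, ?_, ?_⟩
    · have h1 := Real.arctan_lt_pi_div_two v
      have h2 := Real.neg_pi_div_two_lt_arctan v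
      have hsθ : Real.sin (π / 2 - Real.arctan v) = Real.cos (Real.arctan v) :=
        Real.sin_pi_div_two_sub _
      have hcθ : Real.cos (π / 2 - Real.arctan v) = Real.sin (Real.arctan v) :=
        Real.cos_pi_div_two_sub _
      have hθ0 : 0 < π / 2 - Real.arctan v := by linarith
      have hθπ : π / 2 - Real.arctan v < π := by linarith [Real.pi_pos]
      have hsθpos : 0 < Real.sin (π / 2 - Real.arctan v) :=
        Real.sin_pos_of_pos_of_lt_pi hθ0 hθπ
      have hcv : Real.cos (π / 2 - Real.arctan v) = v * Real.sin (π / 2 - Real.arctan v) := by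
        rw [hsθ, hcθ, Real.sin_arctan, Real.cos_arctan]
        ring
      have hsub : Real.sin (π / 2 - Real.arctan v - α)
          = Real.sin (π / 2 - Real.arctan v) * (a * t / b) := by
        rw [Real.sin_sub, hcv, hv]
        field_simp
        ring
      constructor
      · by_contra h
        push_neg at h
        have h5 : 0 ≤ α - (π / 2 - Real.arctan v) := by linarith
        have h6 : α - (π / 2 - Real.arctan v) < π := by linarith
        have hnn := Real.sin_nonneg_of_nonneg_of_le_pi h5 h6.le
        have hle : Real.sin (π / 2 - Real.arctan v - α) ≤ 0 := by
          rw [show π / 2 - Real.arctan v - α = -(α - (π / 2 - Real.arctan v)) by ring,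
            Real.sin_neg]
          linarith
        have hpos : 0 < Real.sin (π / 2 - Real.arctan v) * (a * t / b) := by positivity
        rw [hsub] at hle; linarith
      · exact hθπ
    · have h1 := Real.arctan_lt_pi_div_two v
      have h2 := Real.neg_pi_div_two_lt_arctan v
      have hθ0 : 0 < π / 2 - Real.arctan v := by linarith
      have hθπ : π / 2 - Real.arctan v < π := by linarith [Real.pi_pos]
      have hsθpos : 0 < Real.sin (π / 2 - Real.arctan v) :=
        Real.sin_pos_of_pos_of_lt_pi hθ0 hθπ
      have hcv : Real.cos (π / 2 - Real.arctan v) = v * Real.sin (π / 2 - Real.arctan v) := by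
        rw [Real.sin_pi_div_two_sub, Real.cos_pi_div_two_sub, Real.sin_arctan, Real.cos_arctan]
        ring
      have hsub : Real.sin (π / 2 - Real.arctan v - α)
          = Real.sin (π / 2 - Real.arctan v) * (a * t / b) := by
        rw [Real.sin_sub, hcv, hv]
        field_simp
        ring
      unfold subF
      rw [hsub, mul_comm (Real.sin (π / 2 - Real.arctan v)) (a * t / b), mul_div_assoc,
        div_self hsθpos.ne', mul_one]
      field_simp

end aux

/-- For linearly independent x, y ∈ ℝ^{n+1} (n = k + ℓ + 1) with angle
α = arccos(⟨x,y⟩/(‖x‖‖y‖)), the function τ ↦ τ^k/‖τx − y‖^{n+1} is integrable on (0, ∞) and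
`∫₀^∞ τ^k / ‖τx − y‖^{n+1} dτ = Ω_{k,ℓ}(α) / (‖x‖^{k+1} ‖y‖^{ℓ+1} sin^n α)`. -/
theorem cone_ray_integral (k l : ℕ) (x y : EuclideanSpace ℝ (Fin (k + l + 2)))
    (hxy : LinearIndependent ℝ ![x, y]) :
    MeasureTheory.IntegrableOn
      (fun τ : ℝ => τ ^ k / ‖τ • x - y‖ ^ (k + l + 2)) (Set.Ioi 0) ∧
    ∫ τ in Set.Ioi (0:ℝ), τ ^ k / ‖τ • x - y‖ ^ (k + l + 2)
      = Omega k l (Real.arccos ((inner ℝ x y : ℝ) / (‖x‖ * ‖y‖))) /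
        (‖x‖ ^ (k + 1) * ‖y‖ ^ (l + 1) *
          Real.sin (Real.arccos ((inner ℝ x y : ℝ) / (‖x‖ * ‖y‖))) ^ (k + l + 1)) := by
  have hx0 : x ≠ 0 := by simpa using hxy.ne_zero 0
  have hy0 : y ≠ 0 := by simpa using hxy.ne_zero 1
  have hpair := LinearIndependent.pair_iff.mp hxy
  have ha : 0 < ‖x‖ := norm_pos_iff.mpr hx0
  have hb : 0 < ‖y‖ := norm_pos_iff.mpr hy0
  have hCS1 : (inner ℝ x y : ℝ) < ‖x‖ * ‖y‖ := by
    rw [inner_lt_norm_mul_iff_real]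
    intro h
    have := (hpair ‖y‖ (-‖x‖) (by rw [neg_smul, h]; abel)).1
    exact hb.ne' this
  have hCS2 : -(‖x‖ * ‖y‖) < (inner ℝ x y : ℝ) := by
    have h := @inner_lt_norm_mul_iff_real (EuclideanSpace ℝ (Fin (k + l + 2))) _ _ (-x) y
    rw [inner_neg_left, norm_neg] at h
    have h2 : ‖y‖ • (-x) ≠ ‖x‖ • y := by
      intro hh
      have := (hpair ‖y‖ ‖x‖ (by rw [← hh, smul_neg]; abel)).1
      exact hb.ne' this
    have := h.mpr h2
    linarith
  set a := ‖x‖ with hadef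
  set b := ‖y‖ with hbdef
  set c : ℝ := inner ℝ x y with hcdef
  set r : ℝ := c / (a * b) with hrdef
  set α := Real.arccos r with hαdef
  have hr2 : r < 1 := by rw [hrdef, div_lt_one (by positivity)]; linarith
  have hr1 : (-1 : ℝ) < r := by rw [hrdef, lt_div_iff₀ (by positivity)]; linarith
  have hα0 : 0 < α := Real.arccos_pos.2 hr2
  have hαπ : α < π := lt_of_le_of_ne (Real.arccos_le_pi r)
    (fun h => by have := Real.arccos_eq_pi.1 h; linarith)
  have hsα : 0 < Real.sin α := Real.sin_pos_of_pos_of_lt_pi hα0 hαπ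
  have hcos : Real.cos α = r := Real.cos_arccos hr1.le hr2.le
  have hcab : c = a * b * Real.cos α := by
    rw [hcos, hrdef]; field_simp
  have hnorm : ∀ τ : ℝ, ‖τ • x - y‖ ^ 2 = a ^ 2 * τ ^ 2 - 2 * c * τ + b ^ 2 := by
    intro τ
    rw [@norm_sub_sq_real, real_inner_smul_left, norm_smul, Real.norm_eq_abs, mul_pow, sq_abs,
      ← hcdef, ← hadef, ← hbdef]
    ring
  have hkey : ∀ θ ∈ Ioo α π, ‖subF a b α θ • x - y‖ = b * Real.sin α / Real.sin θ := by
    intro θ hθ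
    have hsθ : 0 < Real.sin θ := Real.sin_pos_of_pos_of_lt_pi (hα0.trans hθ.1) hθ.2
    have hpyth := Real.sin_sq_add_cos_sq θ
    have hpyth2 := Real.sin_sq_add_cos_sq α
    have h2 : ‖subF a b α θ • x - y‖ ^ 2 = (b * Real.sin α / Real.sin θ) ^ 2 := by
      rw [hnorm, hcab]
      unfold subF
      rw [Real.sin_sub]
      field_simp
      linear_combination (Real.sin α ^ 2) * hpyth - Real.sin θ ^ 2 * hpyth2
    have hw : 0 < b * Real.sin α / Real.sin θ := by positivity
    have hfac : (‖subF a b α θ • x - y‖ - b * Real.sin α / Real.sin θ) *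
        (‖subF a b α θ • x - y‖ + b * Real.sin α / Real.sin θ) = 0 := by
      linear_combination h2
    rcases mul_eq_zero.1 hfac with h | h
    · linarith
    · have := norm_nonneg (subF a b α θ • x - y); linarith
  set g : ℝ → ℝ := fun τ : ℝ => τ ^ k / ‖τ • x - y‖ ^ (k + l + 2) with hgdef
  have hder : ∀ θ ∈ Ioo α π, HasDerivWithinAt (subF a b α)
      ((b / a) * (Real.sin α / Real.sin θ ^ 2)) (Ioo α π) θ :=
    fun θ hθ => (subF_hasDerivAt hα0 hαπ hθ).hasDerivWithinAt
  have hinj := (subF_strictMono hα0 hαπ ha hb).injOn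
  have himg := subF_image hα0 hαπ ha hb (b := b) (α := α)
  set C : ℝ := 1 / (a ^ (k + 1) * b ^ (l + 1) * Real.sin α ^ (k + l + 1)) with hCdef
  have hpt : ∀ θ ∈ Ioo α π, |(b / a) * (Real.sin α / Real.sin θ ^ 2)| • g (subF a b α θ)
      = Real.sin (θ - α) ^ k * Real.sin θ ^ l * C := by
    intro θ hθ
    have hsθ : 0 < Real.sin θ := Real.sin_pos_of_pos_of_lt_pi (hα0.trans hθ.1) hθ.2
    rw [smul_eq_mul, abs_of_pos (by positivity), hgdef]
    show (b / a) * (Real.sin α / Real.sin θ ^ 2) *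
      ((subF a b α θ) ^ k / ‖subF a b α θ • x - y‖ ^ (k + l + 2)) = _
    rw [hkey θ hθ, hCdef]
    unfold subF
    field_simp
    rw [div_pow, div_pow]
    field_simp
    ring
  have hcont2 : Continuous (fun θ : ℝ => Real.sin (θ - α) ^ k * Real.sin θ ^ l * C) := by
    fun_prop
  have hint2 : IntegrableOn (fun θ : ℝ => Real.sin (θ - α) ^ k * Real.sin θ ^ l * C)
      (Ioo α π) := (hcont2.integrableOn_Icc (a := α) (b := π)).mono_set Ioo_subset_Icc_self
  have hint1 : IntegrableOn
      (fun θ => |(b / a) * (Real.sin α / Real.sin θ ^ 2)| • g (subF a b α θ)) (Ioo α π) :=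
    hint2.congr_fun (fun θ hθ => (hpt θ hθ).symm) measurableSet_Ioo
  have hintg : IntegrableOn g (Ioi 0) := by
    rw [← himg]
    exact (integrableOn_image_iff_integrableOn_abs_deriv_smul measurableSet_Ioo hder hinj g).2
      hint1
  refine ⟨hintg, ?_⟩
  have hCV := integral_image_eq_integral_abs_deriv_smul measurableSet_Ioo hder hinj g
  rw [himg] at hCV
  have hI2 : (∫ θ in Ioo α π, |(b / a) * (Real.sin α / Real.sin θ ^ 2)| • g (subF a b α θ))
      = ∫ θ in Ioo α π, Real.sin (θ - α) ^ k * Real.sin θ ^ l * C :=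
    setIntegral_congr_fun measurableSet_Ioo hpt
  have hI3 : (∫ θ in Ioo α π, Real.sin (θ - α) ^ k * Real.sin θ ^ l * C)
      = (∫ θ in Ioo α π, Real.sin (θ - α) ^ k * Real.sin θ ^ l) * C :=
    integral_mul_const _ _
  have hI4 : (∫ θ in Ioo α π, Real.sin (θ - α) ^ k * Real.sin θ ^ l) = Omega k l α := by
    rw [Omega, intervalIntegral.integral_of_le hαπ.le, integral_Ioc_eq_integral_Ioo]
  show (∫ τ in Ioi (0:ℝ), g τ) = Omega k l α /
      (a ^ (k + 1) * b ^ (l + 1) * Real.sin α ^ (k + l + 1))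
  rw [hCV, hI2, hI3, hI4, hCdef]
  rw [mul_one_div]
end

section
/- Let k, ℓ ≥ 0 be integers and set n = k + ℓ + 1. For every real b > 0 and every α ∈ (0, π), ∫_{−b·cos α}^{∞} (u + b·cos α)^k / (u² + b²·sin²α)^{(n+1)/2} du = Ω_{k,ℓ}(α) / (b^{ℓ+1} sin^n α). -/
open Real

/-- Let k, ℓ ≥ 0 and n = k + ℓ + 1.  For every real b > 0 and α ∈ (0, π),
`∫_{−b·cos α}^{∞} (u + b·cos α)^k / (u² + b²·sin²α)^{(n+1)/2} du = Ω_{k,ℓ}(α)/(b^{ℓ+1} sin^n α)`. -/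
theorem key_integral_identity (k l : ℕ) (b : ℝ) (hb : 0 < b)
    (α : ℝ) (hα : α ∈ Set.Ioo 0 Real.pi) :
    ∫ u in Set.Ioi (-(b * Real.cos α)),
        (u + b * Real.cos α) ^ k / (u ^ 2 + b ^ 2 * Real.sin α ^ 2) ^ (((k : ℝ) + l + 2) / 2)
      = Omega k l α / (b ^ (l + 1) * Real.sin α ^ (k + l + 1)) := by
  obtain ⟨hα0, hαπ⟩ := hα
  have hsin : 0 < Real.sin α := Real.sin_pos_of_pos_of_lt_pi hα0 hαπ
  set s : ℝ := b * Real.sin α with hs_def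
  have hs : 0 < s := mul_pos hb hsin
  set f : ℝ → ℝ := fun θ => -(s * (Real.cos θ / Real.sin θ)) with hf_def
  set g : ℝ → ℝ := fun u =>
    (u + b * Real.cos α) ^ k / (u ^ 2 + b ^ 2 * Real.sin α ^ 2) ^ (((k : ℝ) + l + 2) / 2)
    with hg_def
  have hfα : f α = -(b * Real.cos α) := by
    simp only [hf_def, hs_def]
    field_simp
  -- derivative
  have hderiv : ∀ θ ∈ Set.Ioo α π, HasDerivAt f (s / Real.sin θ ^ 2) θ := by
    intro θ hθ
    have hθsin : (0:ℝ) < Real.sin θ :=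
      Real.sin_pos_of_pos_of_lt_pi (lt_trans hα0 hθ.1) hθ.2
    have h1 : HasDerivAt (fun θ => Real.cos θ / Real.sin θ)
        ((-Real.sin θ * Real.sin θ - Real.cos θ * Real.cos θ) / Real.sin θ ^ 2) θ :=
      (Real.hasDerivAt_cos θ).div (Real.hasDerivAt_sin θ) hθsin.ne'
    have h2 := (h1.const_mul s).neg
    refine h2.congr_deriv ?_
    have hpy := Real.sin_sq_add_cos_sq θ
    have hne : Real.sin θ ≠ 0 := hθsin.ne'
    field_simp
    linear_combination hpy
  -- continuity on Ico α π
  have hcont : ContinuousOn f (Set.Ico α π) := by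
    apply ContinuousOn.neg
    apply ContinuousOn.mul continuousOn_const
    apply ContinuousOn.div Real.continuous_cos.continuousOn Real.continuous_sin.continuousOn
    intro θ hθ
    exact (Real.sin_pos_of_pos_of_lt_pi (lt_of_lt_of_le hα0 hθ.1) hθ.2).ne'
  -- strict monotonicity on Ico α π
  have hmono : StrictMonoOn f (Set.Ico α π) := by
    apply strictMonoOn_of_deriv_pos (convex_Ico α π) hcont
    intro x hx
    rw [interior_Ico] at hx
    rw [(hderiv x hx).deriv]
    have hxsin : (0:ℝ) < Real.sin x :=
      Real.sin_pos_of_pos_of_lt_pi (lt_trans hα0 hx.1) hx.2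
    positivity
  -- tendsto atTop at π⁻
  have htend : Filter.Tendsto f (nhdsWithin π (Set.Iio π)) Filter.atTop := by
    have h1 : Filter.Tendsto (fun θ => -(s * Real.cos θ)) (nhdsWithin π (Set.Iio π)) (nhds s) := by
      have := ((Real.continuous_cos.tendsto π).const_mul s).neg
      rw [Real.cos_pi] at this
      simpa using this.mono_left nhdsWithin_le_nhds
    have h2 : Filter.Tendsto (fun θ => (Real.sin θ)⁻¹) (nhdsWithin π (Set.Iio π)) Filter.atTop := by
      apply tendsto_inv_nhdsGT_zero.comp
      rw [tendsto_nhdsWithin_iff]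
      constructor
      · have := (Real.continuous_sin.tendsto π).mono_left
          (nhdsWithin_le_nhds (s := Set.Iio π))
        simpa using this
      · filter_upwards [Ioo_mem_nhdsLT_of_mem (Set.mem_Ioc.2 ⟨hα0.trans hαπ, le_refl π⟩)]
          with θ hθ
        exact Real.sin_pos_of_pos_of_lt_pi hθ.1 hθ.2
    have := h1.pos_mul_atTop hs h2
    apply this.congr
    intro θ
    simp only [hf_def]
    ring
  -- image
  have himg : f '' Set.Ioo α π = Set.Ioi (f α) := by
    apply Set.Subset.antisymm
    · rintro _ ⟨θ, hθ, rfl⟩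
      exact hmono (Set.mem_Ico.2 ⟨le_refl α, hαπ⟩)
        (Set.mem_Ico.2 ⟨hθ.1.le, hθ.2⟩) hθ.1
    · intro u hu
      have hfreq : ∃ᶠ θ in nhdsWithin π (Set.Iio π),
          θ ∈ Set.Ioo α π ∧ u < f θ := by
        apply Filter.Eventually.frequently
        filter_upwards [Ioo_mem_nhdsLT_of_mem (Set.mem_Ioc.2 ⟨hαπ, le_refl π⟩),
          htend.eventually_gt_atTop u] with θ h1 h2
        exact ⟨h1, h2⟩
      obtain ⟨θ₀, hθ₀, hu0⟩ := hfreq.exists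
      have hsub : Set.Ioo (f α) (f θ₀) ⊆ f '' Set.Ioo α θ₀ := by
        apply intermediate_value_Ioo hθ₀.1.le
        exact hcont.mono (Set.Icc_subset_Ico_right hθ₀.2)
      have : u ∈ Set.Ioo (f α) (f θ₀) := ⟨hu, hu0⟩
      obtain ⟨θ, hθ, rfl⟩ := hsub this
      exact ⟨θ, ⟨hθ.1, hθ.2.trans hθ₀.2⟩, rfl⟩
  have hinj : Set.InjOn f (Set.Ioo α π) :=
    (hmono.injOn).mono Set.Ioo_subset_Ico_self
  -- change of variables
  have hcov := MeasureTheory.integral_image_eq_integral_abs_deriv_smul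
    (f' := fun θ => s / Real.sin θ ^ 2) measurableSet_Ioo
    (fun θ hθ => (hderiv θ hθ).hasDerivWithinAt) hinj g
  rw [himg, hfα] at hcov
  rw [show (∫ u in Set.Ioi (-(b * Real.cos α)),
        (u + b * Real.cos α) ^ k / (u ^ 2 + b ^ 2 * Real.sin α ^ 2) ^ (((k : ℝ) + l + 2) / 2))
      = ∫ u in Set.Ioi (-(b * Real.cos α)), g u from rfl, hcov]
  -- pointwise rewriting of the transformed integrand
  have hpt : ∀ θ ∈ Set.Ioo α π,
      |s / Real.sin θ ^ 2| • g (f θ)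
        = (Real.sin (θ - α) ^ k * Real.sin θ ^ l)
            / (b ^ (l + 1) * Real.sin α ^ (k + l + 1)) := by
    intro θ hθ
    have hθsin : (0:ℝ) < Real.sin θ :=
      Real.sin_pos_of_pos_of_lt_pi (lt_trans hα0 hθ.1) hθ.2
    have hA : f θ + b * Real.cos α = b * Real.sin (θ - α) / Real.sin θ := by
      simp only [hf_def, hs_def]
      rw [Real.sin_sub]
      field_simp
      ring
    have hB : (f θ) ^ 2 + b ^ 2 * Real.sin α ^ 2 = (s / Real.sin θ) ^ 2 := by
      simp only [hf_def, hs_def]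
      have hpy := Real.sin_sq_add_cos_sq θ
      field_simp
      nlinarith [hpy]
    have hpos : (0:ℝ) < s / Real.sin θ := div_pos hs hθsin
    have hC : ((s / Real.sin θ) ^ 2 : ℝ) ^ (((k : ℝ) + l + 2) / 2)
        = (s / Real.sin θ) ^ (k + l + 2) := by
      rw [← Real.rpow_natCast (s / Real.sin θ) 2, ← Real.rpow_mul hpos.le,
        ← Real.rpow_natCast (s / Real.sin θ) (k + l + 2)]
      congr 1
      push_cast
      ring
    have habs : |s / Real.sin θ ^ 2| = s / Real.sin θ ^ 2 := by
      rw [abs_of_pos]; positivity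
    rw [smul_eq_mul, habs]
    simp only [hg_def, hA, hB, hC]
    simp only [hs_def]
    rw [div_pow]
    have hne : Real.sin θ ≠ 0 := hθsin.ne'
    field_simp
    ring_nf
    simp only [inv_pow]
    field_simp
  rw [MeasureTheory.setIntegral_congr_fun measurableSet_Ioo hpt]
  rw [MeasureTheory.integral_div]
  rw [Omega, intervalIntegral.integral_of_le hαπ.le,
    ← MeasureTheory.integral_Ioc_eq_integral_Ioo]
end
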